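/- If P(z) = Σ_{j=0}^n a_j z^j is a skew-reciprocal Littlewood polynomial, i.e., a_j ∈ {-1,1} and a_j = (-1)^j a_{n-j} for each j, then P has no zeros on the unit circle |z| = 1. -/

import Mathlib

open Polynomial Finset

/-- Mod-2 Bézout identity between the even-part and odd-part "all ones" polynomials. -/
private lemma littlewood_bezout_aux (m : ℕ) :
    (∑ j ∈ Finset.range (2 * m + 1), if Even j then (X : (ZMod 2)[X]) ^ j else 0)
      = 1 + X * ∑ j ∈ Finset.range (2 * m + 1), if Odd j then (X : (ZMod 2)[X]) ^ j else 0 := by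
  induction m with
  | zero => simp
  | succ m ih =>
      have h1 : 2 * (m + 1) + 1 = (2 * m + 1) + 1 + 1 := by ring
      rw [h1,
        Finset.sum_range_succ (fun j => if Even j then (X : (ZMod 2)[X]) ^ j else 0),
        Finset.sum_range_succ (fun j => if Even j then (X : (ZMod 2)[X]) ^ j else 0),
        Finset.sum_range_succ (fun j => if Odd j then (X : (ZMod 2)[X]) ^ j else 0),
        Finset.sum_range_succ (fun j => if Odd j then (X : (ZMod 2)[X]) ^ j else 0),
        ih]
      have he : Even (2 * m + 1 + 1) := ⟨m + 1, by ring⟩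
      have ho : Odd (2 * m + 1) := ⟨m, by ring⟩
      simp only [he, ho, Nat.not_even_iff_odd.mpr ho, Nat.not_odd_iff_even.mpr he,
        if_true, if_false]
      ring

/-- A skew-reciprocal Littlewood polynomial has no zeros on the unit circle. -/
theorem skewReciprocal_littlewood_no_unimodular_zero
    (n : ℕ) (a : ℕ → ℝ)
    (ha : ∀ j ≤ n, a j = 1 ∨ a j = -1)
    (hsk : ∀ j ≤ n, a j = (-1) ^ j * a (n - j)) :
    ∀ z : ℂ, ‖z‖ = 1 → ∑ j ∈ Finset.range (n + 1), (a j : ℂ) * z ^ j ≠ 0 := by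
  intro z hz hPz
  have hzne : z ≠ 0 := by
    intro h; rw [h] at hz; simp at hz
  rcases Nat.even_or_odd n with hn | hn
  swap
  · -- n odd: hypotheses are contradictory
    have h1 := hsk 0 (Nat.zero_le n)
    have h2 := hsk n le_rfl
    rw [Nat.sub_self] at h2
    simp only [pow_zero, one_mul, Nat.sub_zero, hn.neg_one_pow] at h1 h2
    rcases ha 0 (Nat.zero_le n) with h | h <;> rcases ha n le_rfl with h' | h' <;>
      rw [h, h'] at h1 h2 <;> norm_num at *
  -- n even
  obtain ⟨m, hm⟩ := hn
  have hneven : Even n := ⟨m, hm⟩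
  set E := ∑ j ∈ Finset.range (n + 1), if Even j then (a j : ℂ) * z ^ j else 0 with hEdef
  set O := ∑ j ∈ Finset.range (n + 1), if Odd j then (a j : ℂ) * z ^ j else 0 with hOdef
  have hEO : E + O = 0 := by
    have h0 : E + O = ∑ j ∈ Finset.range (n + 1), (a j : ℂ) * z ^ j := by
      rw [hEdef, hOdef, ← Finset.sum_add_distrib]
      apply Finset.sum_congr rfl
      intro j hj
      by_cases h : Even j
      · simp [h, Nat.not_odd_iff_even]
      · simp [h, Nat.not_even_iff_odd.mp h]
    rw [h0, hPz]
  have hconj : (starRingEnd ℂ) z = z⁻¹ := by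
    have hns : Complex.normSq z = 1 := by
      rw [← Complex.sq_norm, hz]; norm_num
    have h : (starRingEnd ℂ) z * z = 1 := by
      rw [mul_comm, Complex.mul_conj, hns]; norm_num
    exact eq_inv_of_mul_eq_one_left h
  -- conjugation-reflection identities
  have key : ∀ (Q : ℕ → Prop) [DecidablePred Q], (∀ j ≤ n, (Q j ↔ Q (n - j))) →
      z ^ n * (starRingEnd ℂ) (∑ j ∈ Finset.range (n + 1), if Q j then (a j : ℂ) * z ^ j else 0)
        = ∑ j ∈ Finset.range (n + 1), if Q j then (a (n - j) : ℂ) * z ^ j else 0 := by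
    intro Q _ hQ
    rw [map_sum, Finset.mul_sum]
    have step : ∀ j ∈ Finset.range (n + 1),
        z ^ n * (starRingEnd ℂ) (if Q j then (a j : ℂ) * z ^ j else 0)
          = if Q j then (a j : ℂ) * z ^ (n - j) else 0 := by
      intro j hj
      have hjn : j ≤ n := Nat.lt_succ_iff.mp (Finset.mem_range.mp hj)
      by_cases h : Q j
      · simp only [h, if_true, map_mul, map_pow, hconj, Complex.conj_ofReal]
        rw [pow_sub₀ z hzne hjn, inv_pow]
        ring
      · simp [h]
    rw [Finset.sum_congr rfl step, ← Finset.sum_range_reflect]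
    apply Finset.sum_congr rfl
    intro j hj
    have hjn : j ≤ n := Nat.lt_succ_iff.mp (Finset.mem_range.mp hj)
    have hr : n + 1 - 1 - j = n - j := by omega
    rw [hr, Nat.sub_sub_self hjn]
    exact if_congr (hQ j hjn).symm rfl rfl
  have hQE : ∀ j ≤ n, (Even j ↔ Even (n - j)) := by
    intro j hj
    rw [Nat.even_sub hj]
    simp [hneven]
  have hQO : ∀ j ≤ n, (Odd j ↔ Odd (n - j)) := by
    intro j hj
    rw [← Nat.not_even_iff_odd, ← Nat.not_even_iff_odd, Nat.even_sub hj]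
    simp [hneven]
  have hE2 : z ^ n * (starRingEnd ℂ) E = E := by
    rw [hEdef, key Even hQE]
    apply Finset.sum_congr rfl
    intro j hj
    have hjn : j ≤ n := Nat.lt_succ_iff.mp (Finset.mem_range.mp hj)
    by_cases h : Even j
    · have haj : a (n - j) = a j := by
        have h1 := hsk j hjn
        rw [h.neg_one_pow, one_mul] at h1
        exact h1.symm
      rw [if_pos h, if_pos h, haj]
    · rw [if_neg h, if_neg h]
  have hO2 : z ^ n * (starRingEnd ℂ) O = -O := by
    rw [hOdef, key Odd hQO, ← Finset.sum_neg_distrib]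
    apply Finset.sum_congr rfl
    intro j hj
    have hjn : j ≤ n := Nat.lt_succ_iff.mp (Finset.mem_range.mp hj)
    by_cases h : Odd j
    · have haj : a (n - j) = -(a j) := by
        have h1 := hsk j hjn
        rw [h.neg_one_pow] at h1
        linarith
      rw [if_pos h, if_pos h, haj]
      push_cast
      ring
    · rw [if_neg h, if_neg h, neg_zero]
  have hconjEO : (starRingEnd ℂ) E + (starRingEnd ℂ) O = 0 := by
    have h := congrArg (starRingEnd ℂ) hEO
    simpa using h
  have hEmO : E - O = 0 := by
    have h : z ^ n * ((starRingEnd ℂ) E + (starRingEnd ℂ) O) = 0 := by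
      rw [hconjEO, mul_zero]
    rw [mul_add, hE2, hO2] at h
    linear_combination h
  have hE0 : E = 0 := by linear_combination (hEO + hEmO) / 2
  have hO0 : O = 0 := by linear_combination (hEO - hEmO) / 2
  -- integer coefficients
  set b : ℕ → ℤ := fun j => if a j = 1 then 1 else -1 with hbdef
  have hbpm : ∀ j, b j = 1 ∨ b j = -1 := by
    intro j
    by_cases h : a j = 1 <;> simp [hbdef, h]
  have hbcast : ∀ j ≤ n, ((b j : ℤ) : ℝ) = a j := by
    intro j hj
    rcases ha j hj with h | h <;> simp [hbdef, h]
    intro h'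
    norm_num at h'
  set pe : Polynomial ℤ := ∑ j ∈ Finset.range (n + 1), if Even j then C (b j) * X ^ j else 0
    with hpedef
  set po : Polynomial ℤ := ∑ j ∈ Finset.range (n + 1), if Odd j then C (b j) * X ^ j else 0
    with hpodef
  have heval : ∀ (Q : ℕ → Prop) [DecidablePred Q],
      aeval z (∑ j ∈ Finset.range (n + 1), if Q j then C (b j) * X ^ j else 0)
        = ∑ j ∈ Finset.range (n + 1), if Q j then (a j : ℂ) * z ^ j else 0 := by
    intro Q _
    rw [map_sum]
    apply Finset.sum_congr rfl
    intro j hj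
    have hjn : j ≤ n := Nat.lt_succ_iff.mp (Finset.mem_range.mp hj)
    by_cases h : Q j
    · rw [if_pos h, if_pos h, map_mul, aeval_C, map_pow, aeval_X]
      have : ((b j : ℤ) : ℂ) = ((a j : ℝ) : ℂ) := by
        rw [← hbcast j hjn]
        push_cast
        ring
      rw [algebraMap_int_eq]
      simp only [eq_intCast]
      rw [this]
    · rw [if_neg h, if_neg h, map_zero]
  have hpeval : aeval z pe = E := by rw [hpedef, heval Even, ← hEdef]
  have hpoval : aeval z po = O := by rw [hpodef, heval Odd, ← hOdef]
  -- pe is (up to sign) monic of degree n, so z is an algebraic integer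
  have hdeg : pe.natDegree ≤ n := by
    apply Polynomial.natDegree_sum_le_of_forall_le
    intro j hj
    have hjn : j ≤ n := Nat.lt_succ_iff.mp (Finset.mem_range.mp hj)
    by_cases h : Even j
    · rw [if_pos h]
      exact le_trans (natDegree_C_mul_le _ _) (by rw [natDegree_X_pow]; exact hjn)
    · rw [if_neg h]
      simp
  have hcoeff : pe.coeff n = b n := by
    rw [hpedef, Polynomial.finset_sum_coeff]
    rw [Finset.sum_eq_single n]
    · rw [if_pos hneven, coeff_C_mul, coeff_X_pow, if_pos rfl, mul_one]
    · intro j hj hjne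
      by_cases h : Even j
      · rw [if_pos h, coeff_C_mul, coeff_X_pow, if_neg (fun hc => hjne hc.symm), mul_zero]
      · rw [if_neg h, coeff_zero]
    · intro hc
      exact absurd (Finset.self_mem_range_succ n) hc
  have hqmonic : (C (b n) * pe).Monic := by
    apply Polynomial.monic_of_natDegree_le_of_coeff_eq_one n
    · exact le_trans (natDegree_C_mul_le _ _) hdeg
    · rw [coeff_C_mul, hcoeff]
      rcases hbpm n with h | h <;> rw [h] <;> norm_num
  have hint : IsIntegral ℤ z := by
    refine ⟨C (b n) * pe, hqmonic, ?_⟩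
    have : aeval z (C (b n) * pe) = 0 := by
      rw [map_mul, aeval_C, hpeval, hE0, mul_zero]
    rw [← this]
    rfl
  have hdvd1 : minpoly ℤ z ∣ pe :=
    minpoly.isIntegrallyClosed_dvd hint (by rw [hpeval, hE0])
  have hdvd2 : minpoly ℤ z ∣ po :=
    minpoly.isIntegrallyClosed_dvd hint (by rw [hpoval, hO0])
  -- reduce mod 2
  set f : ℤ →+* ZMod 2 := Int.castRingHom (ZMod 2) with hfdef
  have hmap : ∀ (Q : ℕ → Prop) [DecidablePred Q],
      Polynomial.map f (∑ j ∈ Finset.range (n + 1), if Q j then C (b j) * X ^ j else 0)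
        = ∑ j ∈ Finset.range (n + 1), if Q j then (X : (ZMod 2)[X]) ^ j else 0 := by
    intro Q _
    rw [Polynomial.map_sum]
    apply Finset.sum_congr rfl
    intro j hj
    by_cases h : Q j
    · rw [if_pos h, if_pos h, Polynomial.map_mul, Polynomial.map_C, Polynomial.map_pow,
        Polynomial.map_X]
      have : f (b j) = 1 := by
        rcases hbpm j with h' | h' <;> rw [h'] <;> decide
      rw [this, map_one, one_mul]
    · rw [if_neg h, if_neg h, Polynomial.map_zero]
  have hd1 : Polynomial.map f (minpoly ℤ z) ∣
      ∑ j ∈ Finset.range (n + 1), if Even j then (X : (ZMod 2)[X]) ^ j else 0 := by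
    rw [← hmap Even]
    exact Polynomial.map_dvd f hdvd1
  have hd2 : Polynomial.map f (minpoly ℤ z) ∣
      ∑ j ∈ Finset.range (n + 1), if Odd j then (X : (ZMod 2)[X]) ^ j else 0 := by
    rw [← hmap Odd]
    exact Polynomial.map_dvd f hdvd2
  have hbez : (∑ j ∈ Finset.range (n + 1), if Even j then (X : (ZMod 2)[X]) ^ j else 0)
      - X * (∑ j ∈ Finset.range (n + 1), if Odd j then (X : (ZMod 2)[X]) ^ j else 0) = 1 := by
    have hn1 : n + 1 = 2 * m + 1 := by omega
    rw [hn1, littlewood_bezout_aux m]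
    ring
  have hdvdone : Polynomial.map f (minpoly ℤ z) ∣ 1 := by
    rw [← hbez]
    exact dvd_sub hd1 (Dvd.dvd.mul_left hd2 X)
  have hunit : IsUnit (Polynomial.map f (minpoly ℤ z)) := isUnit_of_dvd_one hdvdone
  have hnd0 : (Polynomial.map f (minpoly ℤ z)).natDegree = 0 :=
    Polynomial.natDegree_eq_zero_of_isUnit hunit
  rw [(minpoly.monic hint).natDegree_map] at hnd0
  have hpos := minpoly.natDegree_pos hint
  omega
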